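/- Let Ṽ_p ∈ ℝ^{n1×p} have orthonormal columns and suppose A = Σ G_i ⊗ K_i is symmetric positive definite. Then the PGD-update problem min over W ∈ ℝ^{n2×p} of J_A(Ṽ_p, W) = ½‖U − Ṽ_p Wᵀ‖_A² has a unique minimizer W̄_p, characterized by the reduced equation Σ_{i=0}^m (Ṽ_pᵀ K_i Ṽ_p) W̄_pᵀ G_iᵀ = Ṽ_pᵀ B. -/

import Mathlib

open Matrix Kronecker

/-- The trace pairing `⟨X, Y⟩ = tr(Xᵀ Y)`. -/
def traceIP {a b : ℕ} (X Y : Matrix (Fin a) (Fin b) ℝ) : ℝ :=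
  Matrix.trace (Xᵀ * Y)

/-- The linear operator `𝒜(X) = Σ_{i=0}^m K_i X G_iᵀ`. -/
def opA {n1 n2 m : ℕ} (K : Fin (m + 1) → Matrix (Fin n1) (Fin n1) ℝ)
    (G : Fin (m + 1) → Matrix (Fin n2) (Fin n2) ℝ)
    (X : Matrix (Fin n1) (Fin n2) ℝ) : Matrix (Fin n1) (Fin n2) ℝ :=
  ∑ i, K i * X * (G i)ᵀ

/-- The objective `J_A(V, W) = ½ ‖U − V Wᵀ‖_A²`. -/
noncomputable def JA {n1 n2 m p : ℕ} (K : Fin (m + 1) → Matrix (Fin n1) (Fin n1) ℝ)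
    (G : Fin (m + 1) → Matrix (Fin n2) (Fin n2) ℝ)
    (U : Matrix (Fin n1) (Fin n2) ℝ)
    (V : Matrix (Fin n1) (Fin p) ℝ) (W : Matrix (Fin n2) (Fin p) ℝ) : ℝ :=
  (1 / 2) * traceIP (opA K G (U - V * Wᵀ)) (U - V * Wᵀ)

section helpers
variable {n1 n2 m p : ℕ}
  (K : Fin (m + 1) → Matrix (Fin n1) (Fin n1) ℝ)
  (G : Fin (m + 1) → Matrix (Fin n2) (Fin n2) ℝ)

/-- The reduced linear operator `W ↦ (Σ (Vᵀ K_i V) Wᵀ G_iᵀ)ᵀ` as a linear map. -/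
def redMap (V : Matrix (Fin n1) (Fin p) ℝ) :
    Matrix (Fin n2) (Fin p) ℝ →ₗ[ℝ] Matrix (Fin n2) (Fin p) ℝ where
  toFun W := (∑ i, (Vᵀ * K i * V) * Wᵀ * (G i)ᵀ)ᵀ
  map_add' W1 W2 := by
    simp [Matrix.transpose_add, Matrix.add_mul, Matrix.mul_add, Finset.sum_add_distrib]
  map_smul' c W := by
    simp [Matrix.transpose_smul, Matrix.smul_mul, Matrix.mul_smul, ← Finset.smul_sum]

lemma single_quad (Ki : Matrix (Fin n1) (Fin n1) ℝ) (Gi : Matrix (Fin n2) (Fin n2) ℝ)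
    (X : Matrix (Fin n1) (Fin n2) ℝ) :
    Matrix.trace ((Ki * X * Giᵀ)ᵀ * X) =
      (fun ji : Fin n2 × Fin n1 => X ji.2 ji.1) ⬝ᵥ
        ((Gi ⊗ₖ Ki) *ᵥ fun ji : Fin n2 × Fin n1 => X ji.2 ji.1) := by
  simp only [Matrix.trace, Matrix.diag, Matrix.mul_apply, Matrix.transpose_apply,
    dotProduct, Matrix.mulVec, kroneckerMap_apply, Fintype.sum_prod_type,
    Finset.sum_mul, Finset.mul_sum]
  refine Finset.sum_congr rfl fun x _ => Finset.sum_congr rfl fun x1 _ =>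
    Finset.sum_congr rfl fun x2 _ => Finset.sum_congr rfl fun x3 _ => by ring

lemma quad_eq_vec (X : Matrix (Fin n1) (Fin n2) ℝ) :
    traceIP (opA K G X) X =
      (fun ji : Fin n2 × Fin n1 => X ji.2 ji.1) ⬝ᵥ
        ((∑ i, (G i) ⊗ₖ (K i)) *ᵥ fun ji : Fin n2 × Fin n1 => X ji.2 ji.1) := by
  have hmv : (∑ i, (G i) ⊗ₖ (K i)) *ᵥ (fun ji : Fin n2 × Fin n1 => X ji.2 ji.1) =
      ∑ i, ((G i) ⊗ₖ (K i)) *ᵥ (fun ji : Fin n2 × Fin n1 => X ji.2 ji.1) := by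
    ext x
    simp only [Matrix.mulVec, dotProduct, Matrix.sum_apply, Finset.sum_mul,
      Finset.sum_apply]
    rw [Finset.sum_comm]
  have hdp : (fun ji : Fin n2 × Fin n1 => X ji.2 ji.1) ⬝ᵥ
      (∑ i, ((G i) ⊗ₖ (K i)) *ᵥ (fun ji : Fin n2 × Fin n1 => X ji.2 ji.1)) =
      ∑ i, (fun ji : Fin n2 × Fin n1 => X ji.2 ji.1) ⬝ᵥ
        (((G i) ⊗ₖ (K i)) *ᵥ (fun ji : Fin n2 × Fin n1 => X ji.2 ji.1)) := by
    simp only [dotProduct, Finset.sum_apply, Finset.mul_sum]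
    rw [Finset.sum_comm]
  rw [traceIP, opA, Matrix.transpose_sum, Matrix.sum_mul, Matrix.trace_sum, hmv, hdp]
  exact Finset.sum_congr rfl fun i _ => single_quad (K i) (G i) X

lemma a_pos (hA : (∑ i, (G i) ⊗ₖ (K i)).PosDef)
    (X : Matrix (Fin n1) (Fin n2) ℝ) (hX : X ≠ 0) :
    0 < traceIP (opA K G X) X := by
  rw [quad_eq_vec]
  have hvx : (fun ji : Fin n2 × Fin n1 => X ji.2 ji.1) ≠ 0 := by
    intro h
    apply hX
    ext i j
    have := congrFun h (j, i)
    simpa using this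
  simpa using hA.dotProduct_mulVec_pos hvx

lemma a_nonneg (hA : (∑ i, (G i) ⊗ₖ (K i)).PosDef)
    (X : Matrix (Fin n1) (Fin n2) ℝ) :
    0 ≤ traceIP (opA K G X) X := by
  by_cases hX : X = 0
  · subst hX; simp [traceIP, opA]
  · exact le_of_lt (a_pos K G hA X hX)

lemma a_sym (hK : ∀ i, (K i)ᵀ = K i) (hG : ∀ i, (G i)ᵀ = G i)
    (X Y : Matrix (Fin n1) (Fin n2) ℝ) :
    traceIP (opA K G X) Y = traceIP (opA K G Y) X := by
  rw [traceIP, traceIP, opA, opA, Matrix.transpose_sum, Matrix.transpose_sum,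
    Matrix.sum_mul, Matrix.sum_mul, Matrix.trace_sum, Matrix.trace_sum]
  refine Finset.sum_congr rfl fun i _ => ?_
  rw [← Matrix.trace_transpose ((K i * X * (G i)ᵀ)ᵀ * Y)]
  simp only [Matrix.transpose_mul, Matrix.transpose_transpose, hK, hG]
  simp only [← Matrix.mul_assoc]
  rw [Matrix.trace_mul_cycle]
  simp only [Matrix.mul_assoc]

lemma opA_sub (X Y : Matrix (Fin n1) (Fin n2) ℝ) :
    opA K G (X - Y) = opA K G X - opA K G Y := by
  simp [opA, Matrix.sub_mul, Matrix.mul_sub, Finset.sum_sub_distrib]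

lemma opA_add (X Y : Matrix (Fin n1) (Fin n2) ℝ) :
    opA K G (X + Y) = opA K G X + opA K G Y := by
  simp [opA, Matrix.add_mul, Matrix.mul_add, Finset.sum_add_distrib]

lemma traceIP_add_left (X Y Z : Matrix (Fin n1) (Fin n2) ℝ) :
    traceIP (X + Y) Z = traceIP X Z + traceIP Y Z := by
  simp [traceIP, Matrix.transpose_add, Matrix.add_mul]

lemma traceIP_add_right (X Y Z : Matrix (Fin n1) (Fin n2) ℝ) :
    traceIP X (Y + Z) = traceIP X Y + traceIP X Z := by
  simp [traceIP, Matrix.mul_add]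

-- `Vᵀ 𝒜(U − V Wᵀ) = Vᵀ B − L(W)`
lemma red_residual (U B : Matrix (Fin n1) (Fin n2) ℝ) (hU : opA K G U = B)
    (V : Matrix (Fin n1) (Fin p) ℝ) (W : Matrix (Fin n2) (Fin p) ℝ) :
    Vᵀ * opA K G (U - V * Wᵀ) =
      Vᵀ * B - ∑ i, (Vᵀ * K i * V) * Wᵀ * (G i)ᵀ := by
  rw [opA_sub, Matrix.mul_sub, hU]
  congr 1
  rw [opA, Matrix.mul_sum]
  exact Finset.sum_congr rfl fun i _ => by simp only [Matrix.mul_assoc]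

-- `⟨𝒜(E), V Cᵀ⟩ = tr(C (Vᵀ 𝒜(E)))`
lemma pairing_eq (E : Matrix (Fin n1) (Fin n2) ℝ)
    (V : Matrix (Fin n1) (Fin p) ℝ) (C : Matrix (Fin n2) (Fin p) ℝ) :
    traceIP (opA K G E) (V * Cᵀ) = Matrix.trace (C * (Vᵀ * opA K G E)) := by
  rw [traceIP]
  rw [← Matrix.trace_transpose ((opA K G E)ᵀ * (V * Cᵀ))]
  simp only [Matrix.transpose_mul, Matrix.transpose_transpose]
  simp only [Matrix.mul_assoc]

lemma trace_WLW {n1 n2 m p : ℕ} (K : Fin (m + 1) → Matrix (Fin n1) (Fin n1) ℝ)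
    (G : Fin (m + 1) → Matrix (Fin n2) (Fin n2) ℝ)
    (V : Matrix (Fin n1) (Fin p) ℝ) (W : Matrix (Fin n2) (Fin p) ℝ) :
    traceIP (opA K G (V * Wᵀ)) (V * Wᵀ) =
      Matrix.trace (W * ∑ i, (Vᵀ * K i * V) * Wᵀ * (G i)ᵀ) := by
  rw [traceIP, ← Matrix.trace_transpose ((opA K G (V * Wᵀ))ᵀ * (V * Wᵀ)), opA]
  simp only [Matrix.transpose_mul, Matrix.transpose_transpose]
  rw [Matrix.mul_sum, Matrix.mul_sum, Matrix.trace_sum, Matrix.trace_sum]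
  refine Finset.sum_congr rfl fun i _ => ?_
  simp only [← Matrix.mul_assoc]

end helpers

theorem pgd_update_unique_minimizer {n1 n2 m p : ℕ}
    (K : Fin (m + 1) → Matrix (Fin n1) (Fin n1) ℝ)
    (G : Fin (m + 1) → Matrix (Fin n2) (Fin n2) ℝ)
    (hK : ∀ i, (K i)ᵀ = K i) (hG : ∀ i, (G i)ᵀ = G i)
    (hA : (∑ i, (G i) ⊗ₖ (K i)).PosDef)
    (U B : Matrix (Fin n1) (Fin n2) ℝ) (hU : opA K G U = B)
    (V : Matrix (Fin n1) (Fin p) ℝ) (hV : Vᵀ * V = 1) :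
    (∃! Wb : Matrix (Fin n2) (Fin p) ℝ,
        ∀ W' : Matrix (Fin n2) (Fin p) ℝ, JA K G U V Wb ≤ JA K G U V W') ∧
    (∀ Wb : Matrix (Fin n2) (Fin p) ℝ,
        (∀ W' : Matrix (Fin n2) (Fin p) ℝ, JA K G U V Wb ≤ JA K G U V W') ↔
          ∑ i, (Vᵀ * K i * V) * Wbᵀ * (G i)ᵀ = Vᵀ * B) := by
  set L : Matrix (Fin n2) (Fin p) ℝ → Matrix (Fin p) (Fin n2) ℝ :=
    fun W => ∑ i, (Vᵀ * K i * V) * Wᵀ * (G i)ᵀ with hL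
  -- from V X = 0 conclude X = 0
  have hVinj : ∀ X : Matrix (Fin p) (Fin n2) ℝ, V * X = 0 → X = 0 := by
    intro X h
    calc X = (Vᵀ * V) * X := by rw [hV, Matrix.one_mul]
      _ = Vᵀ * (V * X) := by rw [Matrix.mul_assoc]
      _ = 0 := by rw [h, Matrix.mul_zero]
  -- key expansion of JA
  have expand : ∀ Wb W' : Matrix (Fin n2) (Fin p) ℝ,
      JA K G U V W' = JA K G U V Wb +
        Matrix.trace ((Wb - W') * (Vᵀ * B - L Wb)) +
        (1 / 2) * traceIP (opA K G (V * (Wb - W')ᵀ)) (V * (Wb - W')ᵀ) := by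
    intro Wb W'
    set E := U - V * Wbᵀ with hE
    set D := V * (Wb - W')ᵀ with hD
    have hsplit : U - V * W'ᵀ = E + D := by
      rw [hE, hD, Matrix.transpose_sub, Matrix.mul_sub]
      abel
    have haED : traceIP (opA K G E) D = Matrix.trace ((Wb - W') * (Vᵀ * B - L Wb)) := by
      rw [hD, pairing_eq, red_residual K G U B hU]
    rw [JA, hsplit, opA_add, traceIP_add_left, traceIP_add_right, traceIP_add_right,
      a_sym K G hK hG D E, haED]
    rw [JA, ← hE]
    ring
  -- minimization given the reduced equation
  have min_of_eq : ∀ Wb : Matrix (Fin n2) (Fin p) ℝ, L Wb = Vᵀ * B →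
      ∀ W', JA K G U V Wb ≤ JA K G U V W' := by
    intro Wb hWb W'
    rw [expand Wb W']
    have h1 : Vᵀ * B - L Wb = 0 := by rw [hWb, sub_self]
    rw [h1, Matrix.mul_zero, Matrix.trace_zero]
    have h2 := a_nonneg K G hA (V * (Wb - W')ᵀ)
    linarith
  -- existence of a solution of the reduced equation
  have hLlin : Function.Injective (redMap K G V) := by
    intro W1 W2 h
    have h0 : redMap K G V (W1 - W2) = 0 := by rw [map_sub, h, sub_self]
    have hL0 : L (W1 - W2) = 0 := by
      have := congrArg Matrix.transpose h0
      simpa [redMap, hL] using this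
    by_contra hne
    have hD : V * (W1 - W2)ᵀ ≠ 0 := by
      intro h'
      exact hne (sub_eq_zero.mp (by
        have := hVinj _ h'
        have : (W1 - W2)ᵀᵀ = (0 : Matrix (Fin p) (Fin n2) ℝ)ᵀ := congrArg Matrix.transpose this
        simpa using sub_eq_zero.mpr (sub_eq_zero.mp (by simpa [sub_eq_zero] using this))))
    have hpos := a_pos K G hA _ hD
    -- but the quadratic form equals tr((W1−W2) ⬝ L(W1−W2)) = 0
    have hzero : traceIP (opA K G (V * (W1 - W2)ᵀ)) (V * (W1 - W2)ᵀ) = 0 := by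
      rw [trace_WLW K G V (W1 - W2)]
      have h5 : (∑ i, (Vᵀ * K i * V) * (W1 - W2)ᵀ * (G i)ᵀ) =
          (0 : Matrix (Fin p) (Fin n2) ℝ) := hL0
      rw [h5, Matrix.mul_zero, Matrix.trace_zero]
    rw [hzero] at hpos
    exact lt_irrefl 0 hpos
  have hLsurj : Function.Surjective (redMap K G V) :=
    (LinearMap.injective_iff_surjective).mp hLlin
  obtain ⟨Ws, hWs⟩ := hLsurj (Vᵀ * B)ᵀ
  have hWsL : L Ws = Vᵀ * B := by
    have := congrArg Matrix.transpose hWs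
    simpa [redMap, hL] using this
  -- minimizer → reduced equation
  have eq_of_min : ∀ Wb : Matrix (Fin n2) (Fin p) ℝ,
      (∀ W', JA K G U V Wb ≤ JA K G U V W') → L Wb = Vᵀ * B := by
    intro Wb hmin
    have h1 : JA K G U V Ws ≤ JA K G U V Wb := min_of_eq Ws hWsL Wb
    have h2 : JA K G U V Wb ≤ JA K G U V Ws := hmin Ws
    have heq : JA K G U V Wb = JA K G U V Ws := le_antisymm h2 h1
    have hexp := expand Ws Wb
    rw [hWsL, sub_self, Matrix.mul_zero, Matrix.trace_zero, heq] at hexp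
    have hq : traceIP (opA K G (V * (Ws - Wb)ᵀ)) (V * (Ws - Wb)ᵀ) = 0 := by linarith
    have hD0 : V * (Ws - Wb)ᵀ = 0 := by
      by_contra hne
      have := a_pos K G hA _ hne
      rw [hq] at this
      exact lt_irrefl 0 this
    have : (Ws - Wb)ᵀ = 0 := hVinj _ hD0
    have hWbWs : Wb = Ws := by
      have h3 : Ws - Wb = 0 := by
        have := congrArg Matrix.transpose this
        simpa using this
      have := sub_eq_zero.mp h3
      exact this.symm
    rw [hWbWs]
    exact hWsL
  constructor
  · refine ⟨Ws, min_of_eq Ws hWsL, ?_⟩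
    intro Wb hmin
    have h1 : L Wb = Vᵀ * B := eq_of_min Wb hmin
    apply hLlin
    have e1 : redMap K G V Wb = (Vᵀ * B)ᵀ := by
      simp only [redMap, LinearMap.coe_mk, AddHom.coe_mk]
      exact congrArg Matrix.transpose h1
    rw [e1, hWs]
  · intro Wb
    constructor
    · exact eq_of_min Wb
    · exact min_of_eq Wb
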